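/- For all real numbers b and ℓ with b ≥ 1.1 − 6·10^{-6} and ℓ ≥ 0, one has (1/ln(2.9/1.1))·ln((b + ℓ)/b) ≤ 0.94·ℓ. -/

import Mathlib

lemma pade_log {x : ℝ} (hx : 1 ≤ x) : 2 - 4/(x+1) ≤ Real.log x := by
  set f : ℝ → ℝ := fun z => Real.log z + 4/(z+1) with hf
  have key : ∀ y : ℝ, 1 ≤ y → HasDerivAt f (y⁻¹ + -4/(y+1)^2) y := by
    intro y hy
    have hy0 : y ≠ 0 := by linarith
    have hy1 : y + 1 ≠ 0 := by linarith
    have d1 : HasDerivAt Real.log y⁻¹ y := Real.hasDerivAt_log hy0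
    have d2 : HasDerivAt (fun z : ℝ => z + 1) 1 y := (hasDerivAt_id y).add_const 1
    have d3 : HasDerivAt (fun z : ℝ => 4/(z+1)) ((0*(y+1) - 4*1)/(y+1)^2) y :=
      (hasDerivAt_const y (4:ℝ)).div d2 hy1
    have := d1.add d3
    convert this using 1
    · rfl
    · rfl
    · rfl
    · ring
  have mono : MonotoneOn f (Set.Ici 1) := by
    apply monotoneOn_of_deriv_nonneg (convex_Ici 1)
    · apply ContinuousOn.add
      · refine Real.continuousOn_log.mono ?_
        intro z hz
        have h1 : (1:ℝ) ≤ z := hz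
        simp only [Set.mem_compl_iff, Set.mem_singleton_iff]
        intro h; rw [h] at h1; norm_num at h1
      · apply ContinuousOn.div continuousOn_const (by fun_prop)
        intro z hz; simp at hz; intro h; linarith
    · intro y hy
      rw [interior_Ici] at hy
      exact ((key y (le_of_lt hy)).differentiableAt).differentiableWithinAt
    · intro y hy
      rw [interior_Ici] at hy
      have hygt : (1:ℝ) < y := hy
      have hy1 : (0:ℝ) < y := by linarith
      rw [(key y (le_of_lt hy)).deriv]
      have hy0 : (0:ℝ) < y := by linarith
      have h4 : (4:ℝ)/(y+1)^2 ≤ 1/y := by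
        rw [div_le_div_iff₀ (by positivity) hy0]
        nlinarith [sq_nonneg (y-1)]
      have e1 : -4/(y+1)^2 = -(4/(y+1)^2) := by ring
      have e2 : y⁻¹ = 1/y := by rw [inv_eq_one_div]
      rw [e1, e2]
      linarith
  have h := mono (Set.mem_Ici.mpr le_rfl) (Set.mem_Ici.mpr hx) hx
  simp only [hf, Real.log_one] at h
  have : (0:ℝ) + 4/(1+1) = 2 := by norm_num
  linarith [h]

lemma pade_log' {p q : ℝ} (hq : 0 < q) (hpq : q ≤ p) :
    2*(p-q)/(p+q) ≤ Real.log p - Real.log q := by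
  have hx : 1 ≤ p / q := (one_le_div hq).mpr hpq
  have h := pade_log hx
  rw [Real.log_div (by linarith) (by linarith)] at h
  have hd : 2 - 4/(p/q+1) = 2*(p-q)/(p+q) := by
    have h0 : p + q ≠ 0 := by linarith
    field_simp
    ring
  linarith [hd ▸ h]

lemma log_29_11 : (0.9672 : ℝ) ≤ Real.log (2.9/1.1) := by
  have e : (2.9:ℝ)/1.1 = 29/11 := by norm_num
  rw [e, Real.log_div (by norm_num) (by norm_num)]
  have h1 := pade_log' (p := 13) (q := 11) (by norm_num) (by norm_num)
  have h2 := pade_log' (p := 15) (q := 13) (by norm_num) (by norm_num)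
  have h3 := pade_log' (p := 18) (q := 15) (by norm_num) (by norm_num)
  have h4 := pade_log' (p := 21) (q := 18) (by norm_num) (by norm_num)
  have h5 := pade_log' (p := 25) (q := 21) (by norm_num) (by norm_num)
  have h6 := pade_log' (p := 29) (q := 25) (by norm_num) (by norm_num)
  norm_num at h1 h2 h3 h4 h5 h6 ⊢
  linarith

/-- For `b ≥ 1.1 − 6·10⁻⁶` and `ℓ ≥ 0`,
`(1/ln(2.9/1.1))·ln((b+ℓ)/b) ≤ 0.94 ℓ`. -/
theorem statement17 (b ℓ : ℝ) (hb : b ≥ 1.1 - 6e-6) (hℓ : ℓ ≥ 0) :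
    (1 / Real.log (2.9 / 1.1)) * Real.log ((b + ℓ) / b) ≤ 0.94 * ℓ := by
  have hb0 : (0:ℝ) < b := by norm_num at hb; linarith
  have hL := log_29_11
  have hL0 : (0:ℝ) < Real.log (2.9/1.1) := by linarith
  have hlog : Real.log ((b+ℓ)/b) ≤ ℓ/b := by
    have := Real.log_le_sub_one_of_pos (x := (b+ℓ)/b) (by positivity)
    have : (b+ℓ)/b - 1 = ℓ/b := by field_simp; ring
    linarith [Real.log_le_sub_one_of_pos (x := (b+ℓ)/b) (show (0:ℝ) < (b+ℓ)/b by positivity), this]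
  have h1 : (1 / Real.log (2.9/1.1)) * Real.log ((b+ℓ)/b) ≤ (1 / Real.log (2.9/1.1)) * (ℓ/b) := by
    apply mul_le_mul_of_nonneg_left hlog (by positivity)
  refine h1.trans ?_
  rw [div_mul_eq_mul_div, one_mul, div_le_iff₀ hL0, div_le_iff₀ hb0]
  have hb' : (1.099994:ℝ) ≤ b := by norm_num at hb ⊢; linarith
  nlinarith [mul_le_mul hL hb' (by norm_num) (le_of_lt hL0), hℓ]
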